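/- For every point p ∈ ℝ², there exist three points c₁, c₂, c₃ ∈ ℝ² such that the closed Euclidean disc of radius 2/√3 centered at p is contained in the union of the closed Euclidean discs of radius 1 centered at c₁, c₂, and c₃. -/

import Mathlib

private lemma stmt4_case1 (t a b : ℝ) (ht2 : t^2 = 3) (ht0 : 0 < t)
    (h1 : a^2 + b^2 ≤ 4/3) (h2 : t*a ≥ b) (h3 : t*a ≥ -b) :
    (a - 1/t)^2 + b^2 ≤ 1 := by
  have ha : 0 ≤ a := by nlinarith
  have hta : t*a ≤ 2 := by nlinarith [sq_nonneg (t*a)]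
  have key : 2*t + 6*a - 3*t*(a^2+b^2) ≥ 0 := by
    nlinarith [mul_nonneg (sub_nonneg.2 h2) (by linarith : (0:ℝ) ≤ t*a + b),
      sq_nonneg (t*a - 1), mul_nonneg ha ht0.le, sq_nonneg (t*a - 2),
      mul_nonneg (mul_nonneg ha ha) ht0.le]
  have hinv : t * (1/t) = 1 := mul_one_div_cancel ht0.ne'
  have h1t : (1/t)^2 = 1/3 := by rw [div_pow, ht2]; norm_num
  nlinarith [mul_nonneg (by positivity : (0:ℝ) ≤ 1/t) key, hinv, h1t]

private lemma stmt4_case2 (t a b : ℝ) (ht2 : t^2 = 3) (ht0 : 0 < t)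
    (h1 : a^2 + b^2 ≤ 4/3) (h2 : b ≥ t*a) (h3 : 0 ≤ b) :
    (a + 1/(2*t))^2 + (b - 1/2)^2 ≤ 1 := by
  have htb : t*b - a ≥ 0 := by nlinarith
  have key : 2*t - 3*a + 3*t*b - 3*t*(a^2+b^2) ≥ 0 := by
    nlinarith [mul_nonneg h3 (sub_nonneg.2 h2), sq_nonneg (t*b - a - 1),
      sq_nonneg (t*b - a - 2), mul_nonneg htb ht0.le]
  have hinv : t * (1/(2*t)) = 1/2 := by field_simp
  have h1t : (1/(2*t))^2 = 1/12 := by rw [div_pow, mul_pow, ht2]; norm_num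
  nlinarith [mul_nonneg (by positivity : (0:ℝ) ≤ 1/(2*t)) key, hinv, h1t]

private lemma stmt4_mem (p : EuclideanSpace ℝ (Fin 2)) (u v : ℝ) (x : EuclideanSpace ℝ (Fin 2))
    (h : (x 0 - p 0 - u)^2 + (x 1 - p 1 - v)^2 ≤ 1) :
    x ∈ Metric.closedBall (p + (WithLp.equiv 2 (Fin 2 → ℝ)).symm ![u, v]) 1 := by
  rw [Metric.mem_closedBall, EuclideanSpace.dist_eq]
  refine Real.sqrt_le_one.mpr ?_
  rw [Fin.sum_univ_two]
  simp only [PiLp.add_apply, WithLp.equiv_symm_apply, WithLp.ofLp_toLp, Matrix.cons_val_zero,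
    Matrix.cons_val_one, Matrix.head_cons, Real.dist_eq, sq_abs]
  ring_nf
  ring_nf at h
  linarith

theorem stmt_4 (p : EuclideanSpace ℝ (Fin 2)) :
    ∃ c₁ c₂ c₃ : EuclideanSpace ℝ (Fin 2),
      Metric.closedBall p (2 / Real.sqrt 3) ⊆
        Metric.closedBall c₁ 1 ∪ Metric.closedBall c₂ 1 ∪ Metric.closedBall c₃ 1 := by
  set t := Real.sqrt 3 with htdef
  have ht2 : t^2 = 3 := Real.sq_sqrt (by norm_num)
  have ht0 : 0 < t := Real.sqrt_pos.mpr (by norm_num)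
  refine ⟨p + (WithLp.equiv 2 (Fin 2 → ℝ)).symm ![1/t, 0],
    p + (WithLp.equiv 2 (Fin 2 → ℝ)).symm ![-(1/(2*t)), 1/2],
    p + (WithLp.equiv 2 (Fin 2 → ℝ)).symm ![-(1/(2*t)), -(1/2)], ?_⟩
  intro x hx
  set a := x 0 - p 0 with hadef
  set b := x 1 - p 1 with hbdef
  have h1 : a^2 + b^2 ≤ 4/3 := by
    rw [Metric.mem_closedBall, EuclideanSpace.dist_eq, Fin.sum_univ_two] at hx
    simp only [Real.dist_eq, sq_abs] at hx
    rw [← hadef, ← hbdef] at hx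
    have h0 : (0:ℝ) ≤ a^2 + b^2 := by positivity
    have h2 : a^2 + b^2 ≤ (2 / t)^2 := by
      have := pow_le_pow_left₀ (Real.sqrt_nonneg (a^2 + b^2)) hx 2
      rwa [Real.sq_sqrt h0] at this
    have h3 : (2 / t)^2 = 4/3 := by rw [div_pow, ht2]; norm_num
    linarith
  by_cases hc1 : t*a ≥ b ∧ t*a ≥ -b
  · exact Or.inl (Or.inl (stmt4_mem p (1/t) 0 x (by
      have := stmt4_case1 t a b ht2 ht0 h1 hc1.1 hc1.2
      rw [← hadef, ← hbdef]; ring_nf; ring_nf at this; linarith)))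
  · by_cases hb : 0 ≤ b
    · refine Or.inl (Or.inr (stmt4_mem p (-(1/(2*t))) (1/2) x ?_))
      have h2 : b ≥ t*a := by
        rcases not_and_or.mp hc1 with h | h
        · linarith [not_le.mp h]
        · linarith [not_le.mp h]
      have := stmt4_case2 t a b ht2 ht0 h1 h2 hb
      rw [← hadef, ← hbdef]; ring_nf; ring_nf at this; linarith
    · refine Or.inr (stmt4_mem p (-(1/(2*t))) (-(1/2)) x ?_)
      have hb' : 0 ≤ -b := by linarith [not_le.mp hb]
      have h2 : -b ≥ t*a := by
        rcases not_and_or.mp hc1 with h | h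
        · linarith [not_le.mp h]
        · linarith [not_le.mp h]
      have := stmt4_case2 t a (-b) ht2 ht0 (by nlinarith) h2 hb'
      rw [← hadef, ← hbdef]; ring_nf; ring_nf at this; linarith
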